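/- Subcriticality criterion: in the Derrida–Retaux model with N ≤ M almost surely (M integer ≥ 2), if (M − 1)·s₀·F'_0(s₀) − a·F_0(s₀) < 0 where s₀ = 1 + (M−1)/a, then Q = lim_n E[X_n]/(E[N])^n = 0. -/

import Mathlib

open scoped ENNReal NNReal
open Filter

/-- Convolution of two `PMF`s on `ℕ`: law of the sum of independent variables. -/
noncomputable def pmfConv (μ ν : PMF ℕ) : PMF ℕ := μ.bind fun x => ν.map (x + ·)

/-- Law of the sum of `n` i.i.d. copies of a variable with law `μ`. -/
noncomputable def iidSum (μ : PMF ℕ) : ℕ → PMF ℕ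
  | 0 => PMF.pure 0
  | n + 1 => pmfConv μ (iidSum μ n)

/-- One step of the Derrida–Retaux recursion:
law of `(X^(1) + ⋯ + X^(N) - a)⁺` (truncated ℕ-subtraction is the positive part). -/
noncomputable def drStep (ν : PMF ℕ) (a : ℕ) (μ : PMF ℕ) : PMF ℕ :=
  (ν.bind fun n => iidSum μ n).map fun y => y - a

/-- The Derrida–Retaux sequence of laws: `drSeq ν μ0 a n` is the law of `X_n`. -/
noncomputable def drSeq (ν μ0 : PMF ℕ) (a : ℕ) : ℕ → PMF ℕ
  | 0 => μ0
  | n + 1 => drStep ν a (drSeq ν μ0 a n)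

/-- Mean (expectation) of a `PMF` on `ℕ`, with values in `ℝ≥0∞`. -/
noncomputable def pmfMean (μ : PMF ℕ) : ℝ≥0∞ := ∑' k : ℕ, μ k * k

/-- Moment generating (probability generating) function `s ↦ E[s^X]` of a `PMF` on `ℕ`,
as a real-valued function (the sum of the series when it converges). -/
noncomputable def genFun (μ : PMF ℕ) (s : ℝ) : ℝ := ∑' k : ℕ, (μ k).toReal * s ^ k

/-! ### Auxiliary machinery -/

section Aux

lemma tsum_pure_mul (b : ℕ) (g : ℕ → ℝ≥0∞) : ∑' k, (PMF.pure b) k * g k = g b := by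
  rw [tsum_eq_single b]
  · simp
  · intro k hk; simp [PMF.pure_apply, hk]

lemma tsum_bind_mul (μ : PMF ℕ) (f : ℕ → PMF ℕ) (g : ℕ → ℝ≥0∞) :
    ∑' k, (μ.bind f) k * g k = ∑' x, μ x * ∑' k, (f x) k * g k := by
  simp only [PMF.bind_apply]
  have : ∀ (k:ℕ), (∑' (x : ℕ), μ x * (f x) k) * g k = ∑' (x:ℕ), μ x * ((f x) k * g k) := by
    intro k; rw [← ENNReal.tsum_mul_right]; congr 1; ext x; ring
  rw [tsum_congr this, ENNReal.tsum_comm]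
  congr 1; ext x
  rw [ENNReal.tsum_mul_left]

lemma tsum_map_mul (μ : PMF ℕ) (f : ℕ → ℕ) (g : ℕ → ℝ≥0∞) :
    ∑' k, (μ.map f) k * g k = ∑' x, μ x * g (f x) := by
  rw [PMF.map, tsum_bind_mul]
  congr 1; ext x
  rw [show ((PMF.pure ∘ f) x) = PMF.pure (f x) from rfl, tsum_pure_mul]

/-- `E[t^X]` with values in `ℝ≥0∞`. -/
noncomputable def eeB (t : ℝ≥0∞) (μ : PMF ℕ) : ℝ≥0∞ := ∑' k, μ k * t ^ k

/-- `E[X t^X]` with values in `ℝ≥0∞`. -/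
noncomputable def eeA (t : ℝ≥0∞) (μ : PMF ℕ) : ℝ≥0∞ := ∑' k, μ k * (k * t ^ k)

lemma conv_tsum (μ ρ : PMF ℕ) (g : ℕ → ℝ≥0∞) :
    ∑' k, (pmfConv μ ρ) k * g k = ∑' x, μ x * ∑' y, ρ y * g (x + y) := by
  rw [pmfConv, tsum_bind_mul]
  congr 1; ext x
  rw [tsum_map_mul]

lemma eeB_conv (t : ℝ≥0∞) (μ ρ : PMF ℕ) : eeB t (pmfConv μ ρ) = eeB t μ * eeB t ρ := by
  simp only [eeB, conv_tsum]
  rw [← ENNReal.tsum_mul_right (f := fun x : ℕ => μ x * t ^ x)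
    (a := ∑' (k : ℕ), ρ k * t ^ k)]
  refine tsum_congr fun x => ?_
  rw [← ENNReal.tsum_mul_left (a := μ x) (f := fun y : ℕ => ρ y * t ^ (x + y)),
    ← ENNReal.tsum_mul_left (a := μ x * t ^ x) (f := fun k : ℕ => ρ k * t ^ k)]
  exact tsum_congr fun y => by rw [pow_add]; ring

lemma eeA_conv (t : ℝ≥0∞) (μ ρ : PMF ℕ) :
    eeA t (pmfConv μ ρ) = eeA t μ * eeB t ρ + eeB t μ * eeA t ρ := by
  simp only [eeA, eeB, conv_tsum]
  rw [← ENNReal.tsum_mul_right (f := fun k : ℕ => μ k * (↑k * t ^ k))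
      (a := ∑' (k : ℕ), ρ k * t ^ k),
    ← ENNReal.tsum_mul_right (f := fun k : ℕ => μ k * t ^ k)
      (a := ∑' (k : ℕ), ρ k * (↑k * t ^ k)),
    ← ENNReal.tsum_add]
  refine tsum_congr fun x => ?_
  rw [← ENNReal.tsum_mul_left (a := μ x)
      (f := fun y : ℕ => ρ y * (↑(x + y) * t ^ (x + y))),
    ← ENNReal.tsum_mul_left (a := μ x * (↑x * t ^ x)) (f := fun k : ℕ => ρ k * t ^ k),
    ← ENNReal.tsum_mul_left (a := μ x * t ^ x) (f := fun k : ℕ => ρ k * (↑k * t ^ k)),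
    ← ENNReal.tsum_add]
  exact tsum_congr fun y => by rw [pow_add]; push_cast; ring

lemma eeB_iid (t : ℝ≥0∞) (μ : PMF ℕ) (n : ℕ) : eeB t (iidSum μ n) = eeB t μ ^ n := by
  induction n with
  | zero => rw [iidSum, eeB, tsum_pure_mul]; simp
  | succ n ih => rw [iidSum, eeB_conv, ih, pow_succ]; ring

lemma one_le_eeB (t : ℝ≥0∞) (ht : 1 ≤ t) (μ : PMF ℕ) : 1 ≤ eeB t μ := by
  have h1 : (1:ℝ≥0∞) = ∑' k, μ k := μ.tsum_coe.symm
  rw [h1, eeB]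
  refine ENNReal.tsum_le_tsum fun k => ?_
  exact le_mul_of_one_le_right zero_le (one_le_pow_of_one_le' ht k)

lemma key_iid (t : ℝ≥0∞) (μ : PMF ℕ) (c b : ℝ≥0∞)
    (h : c * eeA t μ ≤ b * eeB t μ) (n : ℕ) :
    c * eeA t (iidSum μ n) ≤ n * b * eeB t (iidSum μ n) := by
  induction n with
  | zero =>
      rw [iidSum, eeA, tsum_pure_mul]
      simp
  | succ n ih =>
      rw [iidSum, eeA_conv, eeB_conv]
      calc c * (eeA t μ * eeB t (iidSum μ n) + eeB t μ * eeA t (iidSum μ n))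
          = (c * eeA t μ) * eeB t (iidSum μ n) + eeB t μ * (c * eeA t (iidSum μ n)) := by ring
        _ ≤ (b * eeB t μ) * eeB t (iidSum μ n) + eeB t μ * (n * b * eeB t (iidSum μ n)) := by
            gcongr
        _ = (↑(n+1)) * b * (eeB t μ * eeB t (iidSum μ n)) := by push_cast; ring

/-! ### Correlation inequality -/

lemma pt_aux (t : ℝ≥0∞) (ht : 1 ≤ t) (k d : ℕ) :
    (k : ℝ≥0∞) * t ^ (k + d) + (↑(k + d)) * t ^ k ≤ ↑k * t ^ k + ↑(k + d) * t ^ (k + d) := by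
  have h1 : (1:ℝ≥0∞) ≤ t ^ d := one_le_pow_of_one_le' ht d
  push_cast
  rw [pow_add]
  calc (k : ℝ≥0∞) * (t ^ k * t ^ d) + (↑k + ↑d) * t ^ k
      = (↑k * (t ^ k * t ^ d) + ↑k * t ^ k) + ↑d * (t ^ k * 1) := by ring
    _ ≤ (↑k * (t ^ k * t ^ d) + ↑k * t ^ k) + ↑d * (t ^ k * t ^ d) := by gcongr
    _ = ↑k * t ^ k + (↑k + ↑d) * (t ^ k * t ^ d) := by ring

lemma pt (t : ℝ≥0∞) (ht : 1 ≤ t) (k j : ℕ) :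
    (k : ℝ≥0∞) * t ^ j + (j : ℝ≥0∞) * t ^ k ≤ ↑k * t ^ k + ↑j * t ^ j := by
  rcases le_total k j with h | h
  · obtain ⟨d, rfl⟩ := Nat.exists_eq_add_of_le h
    exact pt_aux t ht k d
  · obtain ⟨d, rfl⟩ := Nat.exists_eq_add_of_le h
    have := pt_aux t ht j d
    calc (↑(j+d) : ℝ≥0∞) * t ^ j + ↑j * t ^ (j+d)
        = ↑j * t ^ (j + d) + ↑(j + d) * t ^ j := by ring
      _ ≤ ↑j * t ^ j + ↑(j + d) * t ^ (j + d) := this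
      _ = ↑(j + d) * t ^ (j + d) + ↑j * t ^ j := by ring

/-- Correlation (Chebyshev) inequality: `E[X] E[t^X] ≤ E[X t^X]` for `t ≥ 1`. -/
lemma corr (t : ℝ≥0∞) (ht : 1 ≤ t) (μ : PMF ℕ) : pmfMean μ * eeB t μ ≤ eeA t μ := by
  have expand1 : pmfMean μ * eeB t μ = ∑' k, ∑' j, μ k * μ j * (↑k * t ^ j) := by
    rw [pmfMean, eeB, ← ENNReal.tsum_mul_right (f := fun k : ℕ => μ k * ↑k)
      (a := ∑' (k : ℕ), μ k * t ^ k)]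
    refine tsum_congr fun k => ?_
    rw [← ENNReal.tsum_mul_left (a := μ k * ↑k) (f := fun j : ℕ => μ j * t ^ j)]
    exact tsum_congr fun j => by ring
  have expand2 : pmfMean μ * eeB t μ = ∑' k, ∑' j, μ k * μ j * (↑j * t ^ k) := by
    rw [expand1, ENNReal.tsum_comm]
    exact tsum_congr fun k => tsum_congr fun j => by ring
  have expandA : eeA t μ = ∑' k, ∑' j, μ k * μ j * (↑k * t ^ k) := by
    have h1 : eeA t μ = eeA t μ * ∑' j, μ j := by rw [μ.tsum_coe, mul_one]
    rw [h1, eeA, ← ENNReal.tsum_mul_right (f := fun k : ℕ => μ k * (↑k * t ^ k))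
      (a := ∑' (j : ℕ), μ j)]
    refine tsum_congr fun k => ?_
    rw [← ENNReal.tsum_mul_left (a := μ k * (↑k * t ^ k)) (f := fun j : ℕ => μ j)]
    exact tsum_congr fun j => by ring
  have expandA2 : eeA t μ = ∑' k, ∑' j, μ k * μ j * (↑j * t ^ j) := by
    rw [expandA, ENNReal.tsum_comm]
    exact tsum_congr fun k => tsum_congr fun j => by ring
  have key : pmfMean μ * eeB t μ + pmfMean μ * eeB t μ ≤ eeA t μ + eeA t μ := by
    nth_rewrite 1 [expand1]
    nth_rewrite 1 [expand2]
    nth_rewrite 1 [expandA]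
    nth_rewrite 1 [expandA2]
    rw [← ENNReal.tsum_add, ← ENNReal.tsum_add]
    refine ENNReal.tsum_le_tsum fun k => ?_
    rw [← ENNReal.tsum_add, ← ENNReal.tsum_add]
    refine ENNReal.tsum_le_tsum fun j => ?_
    calc μ k * μ j * (↑k * t ^ j) + μ k * μ j * (↑j * t ^ k)
        = μ k * μ j * (↑k * t ^ j + ↑j * t ^ k) := by ring
      _ ≤ μ k * μ j * (↑k * t ^ k + ↑j * t ^ j) := mul_le_mul_right (pt t ht k j) _
      _ = μ k * μ j * (↑k * t ^ k) + μ k * μ j * (↑j * t ^ j) := by ring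
  have h2 : (2:ℝ≥0∞) * (pmfMean μ * eeB t μ) ≤ 2 * eeA t μ := by
    rw [two_mul, two_mul]; exact key
  exact (ENNReal.mul_le_mul_iff_right (by norm_num) (by norm_num)).mp h2

/-! ### Bernoulli inequality and the propagation step -/

lemma bernoulli_ee' (a c : ℕ) (ha : 1 ≤ a) (j : ℕ) :
    (a : ℝ≥0∞) + c * j ≤ a * (1 + (c : ℝ≥0∞) / a) ^ j := by
  have ha0 : (a : ℝ≥0∞) ≠ 0 := Nat.cast_ne_zero.mpr (by omega)
  have haT : (a : ℝ≥0∞) ≠ ⊤ := ENNReal.natCast_ne_top a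
  have hdiv : (a : ℝ≥0∞) * ((c : ℝ≥0∞) / a) = c := by
    rw [mul_comm, ENNReal.div_mul_cancel ha0 haT]
  have hat : (a : ℝ≥0∞) * (1 + (c : ℝ≥0∞) / a) = a + c := by
    rw [mul_add, mul_one, hdiv]
  have h1t : (1:ℝ≥0∞) ≤ 1 + (c : ℝ≥0∞) / a := le_self_add
  induction j with
  | zero => simp
  | succ j ih =>
      have hsplit : (a:ℝ≥0∞) * (1 + (c : ℝ≥0∞) / a) ^ (j+1)
          = a * (1 + (c : ℝ≥0∞) / a) ^ j + c * (1 + (c : ℝ≥0∞) / a) ^ j := by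
        calc (a:ℝ≥0∞) * (1 + (c : ℝ≥0∞) / a) ^ (j+1)
            = (a * (1 + (c : ℝ≥0∞) / a)) * (1 + (c : ℝ≥0∞) / a) ^ j := by
              rw [pow_succ]; ring
          _ = ((a:ℝ≥0∞) + c) * (1 + (c : ℝ≥0∞) / a) ^ j := by rw [hat]
          _ = a * (1 + (c : ℝ≥0∞) / a) ^ j + c * (1 + (c : ℝ≥0∞) / a) ^ j := by ring
      calc (a : ℝ≥0∞) + c * (j + 1 : ℕ)
          = ((a : ℝ≥0∞) + c * j) + c * 1 := by push_cast; ring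
        _ ≤ a * (1 + (c : ℝ≥0∞) / a) ^ j + c * (1 + (c : ℝ≥0∞) / a) ^ j :=
            add_le_add ih (mul_le_mul_right (one_le_pow_of_one_le' h1t j) c)
        _ = a * (1 + (c : ℝ≥0∞) / a) ^ (j + 1) := hsplit.symm

lemma step (ν μ : PMF ℕ) (a M : ℕ) (ha : 1 ≤ a) (hM : 2 ≤ M)
    (hbd : ∀ k, M < k → ν k = 0)
    (t : ℝ≥0∞) (htdef : t = 1 + ((M - 1 : ℕ) : ℝ≥0∞) / a)
    (hμB : eeB t μ ≠ ⊤)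
    (hμ : ((M - 1 : ℕ) : ℝ≥0∞) * eeA t μ ≤ a * eeB t μ) :
    eeB t (drStep ν a μ) ≠ ⊤ ∧
      ((M - 1 : ℕ) : ℝ≥0∞) * eeA t (drStep ν a μ) ≤ a * eeB t (drStep ν a μ) := by
  set c : ℕ := M - 1 with hc
  have hMc : M = c + 1 := by omega
  have ht1 : (1:ℝ≥0∞) ≤ t := by rw [htdef]; exact le_self_add
  have htT : t ≠ ⊤ := by
    rw [htdef]
    refine ENNReal.add_ne_top.mpr ⟨ENNReal.one_ne_top, ?_⟩
    exact (ENNReal.div_lt_top (ENNReal.natCast_ne_top c) (Nat.cast_ne_zero.mpr (by omega))).ne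
  set π : PMF ℕ := ν.bind fun n => iidSum μ n with hπ
  have hBμ1 : 1 ≤ eeB t μ := one_le_eeB t ht1 μ
  have hBπ_eq : eeB t π = ∑' n, ν n * eeB t μ ^ n := by
    rw [eeB, hπ, tsum_bind_mul]
    exact tsum_congr fun n => by rw [← eeB_iid t μ n]; rfl
  have hBπ_le : eeB t π ≤ eeB t μ ^ M := by
    rw [hBπ_eq]
    calc ∑' n, ν n * eeB t μ ^ n ≤ ∑' n, ν n * eeB t μ ^ M := by
          refine ENNReal.tsum_le_tsum fun n => ?_
          rcases le_or_gt n M with h | h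
          · exact mul_le_mul_right (pow_le_pow_right₀ hBμ1 h) _
          · rw [hbd n h]; simp
      _ = eeB t μ ^ M := by rw [ENNReal.tsum_mul_right, PMF.tsum_coe, one_mul]
  have hBπT : eeB t π ≠ ⊤ :=
    ne_top_of_le_ne_top (ENNReal.pow_ne_top hμB) hBπ_le
  have hAπ_eq : eeA t π = ∑' n, ν n * eeA t (iidSum μ n) := by
    rw [eeA, hπ, tsum_bind_mul]
    exact tsum_congr fun n => rfl
  have hKπ : (c : ℝ≥0∞) * eeA t π ≤ (M : ℝ≥0∞) * a * eeB t π := by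
    rw [hAπ_eq, hBπ_eq, ← ENNReal.tsum_mul_left, ← ENNReal.tsum_mul_left]
    refine ENNReal.tsum_le_tsum fun n => ?_
    rcases le_or_gt n M with h | h
    · calc (c:ℝ≥0∞) * (ν n * eeA t (iidSum μ n)) = ν n * ((c:ℝ≥0∞) * eeA t (iidSum μ n)) := by
            ring
        _ ≤ ν n * ((n : ℝ≥0∞) * a * eeB t (iidSum μ n)) :=
            mul_le_mul_right (key_iid t μ _ _ hμ n) _
        _ ≤ ν n * ((M : ℝ≥0∞) * a * eeB t (iidSum μ n)) := by
            gcongr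
        _ = (M:ℝ≥0∞) * a * (ν n * eeB t μ ^ n) := by rw [eeB_iid]; ring
    · rw [hbd n h]; simp
  have hμ'B : eeB t (drStep ν a μ) = ∑' y, π y * t ^ (y - a) := by
    rw [eeB, drStep, ← hπ, tsum_map_mul]
  have hμ'A : eeA t (drStep ν a μ) = ∑' y, π y * (↑(y - a) * t ^ (y - a)) := by
    rw [eeA, drStep, ← hπ, tsum_map_mul]
  have hB'le : eeB t (drStep ν a μ) ≤ eeB t π := by
    rw [hμ'B, eeB]
    exact ENNReal.tsum_le_tsum fun y =>
      mul_le_mul_right (pow_le_pow_right₀ ht1 (Nat.sub_le y a)) _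
  have hB'T : eeB t (drStep ν a μ) ≠ ⊤ := ne_top_of_le_ne_top hBπT hB'le
  refine ⟨hB'T, ?_⟩
  have hcoef : ∀ y : ℕ, (c:ℝ≥0∞) * ↑(y - a) * t ^ (y - a) * t ^ a + (M:ℝ≥0∞) * a * t ^ y
      ≤ (a:ℝ≥0∞) * t ^ (y - a) * t ^ a + (c:ℝ≥0∞) * ↑y * t ^ y := by
    intro y
    rcases le_or_gt a y with h | h
    · have hy : y = (y - a) + a := by omega
      have hpow : t ^ (y - a) * t ^ a = t ^ y := by rw [← pow_add, ← hy]
      have hcast : (c:ℝ≥0∞) * ↑(y - a) + (M:ℝ≥0∞) * a = (a:ℝ≥0∞) + (c:ℝ≥0∞) * ↑y := by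
        have : c * (y - a) + M * a = a + c * y := by
          rw [hMc]; zify [h]; ring
        exact_mod_cast congrArg (Nat.cast : ℕ → ℝ≥0∞) this
      refine le_of_eq ?_
      calc (c:ℝ≥0∞) * ↑(y - a) * t ^ (y - a) * t ^ a + (M:ℝ≥0∞) * a * t ^ y
          = ((c:ℝ≥0∞) * ↑(y - a) + (M:ℝ≥0∞) * a) * t ^ y := by rw [← hpow]; ring
        _ = ((a:ℝ≥0∞) + (c:ℝ≥0∞) * ↑y) * t ^ y := by rw [hcast]
        _ = (a:ℝ≥0∞) * t ^ (y - a) * t ^ a + (c:ℝ≥0∞) * ↑y * t ^ y := by rw [← hpow]; ring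
    · have hy0 : y - a = 0 := by omega
      set j : ℕ := a - y with hj
      have hja : j + y = a := by omega
      have hber : (a:ℝ≥0∞) + c * j ≤ a * t ^ j := by rw [htdef]; exact bernoulli_ee' a c ha j
      have hber' : ((a:ℝ≥0∞) + c * j) * t ^ y ≤ a * t ^ a := by
        calc ((a:ℝ≥0∞) + c * j) * t ^ y ≤ (a * t ^ j) * t ^ y := mul_le_mul_left hber _
          _ = a * t ^ a := by rw [mul_assoc, ← pow_add, hja]
      have hMa : (M:ℝ≥0∞) * a = ((a:ℝ≥0∞) + c * j) + c * y := by
        have : M * a = (a + c * j) + c * y := by rw [hMc, ← hja]; ring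
        exact_mod_cast congrArg (Nat.cast : ℕ → ℝ≥0∞) this
      calc (c:ℝ≥0∞) * ↑(y - a) * t ^ (y - a) * t ^ a + (M:ℝ≥0∞) * a * t ^ y
          = (((a:ℝ≥0∞) + c * j) + c * y) * t ^ y := by rw [hy0, hMa]; simp
        _ = ((a:ℝ≥0∞) + c * j) * t ^ y + c * y * t ^ y := by ring
        _ ≤ (a:ℝ≥0∞) * t ^ a + c * y * t ^ y := add_le_add hber' le_rfl
        _ ≤ (a:ℝ≥0∞) * t ^ (y - a) * t ^ a + (c:ℝ≥0∞) * ↑y * t ^ y := by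
            rw [hy0]; simp
  have hsum : (∑' y, π y * ((c:ℝ≥0∞) * ↑(y - a) * t ^ (y - a) * t ^ a))
        + (∑' y, π y * ((M:ℝ≥0∞) * a * t ^ y))
      ≤ (∑' y, π y * ((a:ℝ≥0∞) * t ^ (y - a) * t ^ a))
        + (∑' y, π y * ((c:ℝ≥0∞) * ↑y * t ^ y)) := by
    rw [← ENNReal.tsum_add, ← ENNReal.tsum_add]
    refine ENNReal.tsum_le_tsum fun y => ?_
    rw [← mul_add, ← mul_add]
    exact mul_le_mul_right (hcoef y) _
  have idD : (∑' y, π y * ((c:ℝ≥0∞) * ↑(y - a) * t ^ (y - a) * t ^ a))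
      = ((c:ℝ≥0∞) * eeA t (drStep ν a μ)) * t ^ a := by
    rw [hμ'A, ← ENNReal.tsum_mul_left, ← ENNReal.tsum_mul_right]
    exact tsum_congr fun y => by ring
  have idR : (∑' y, π y * ((a:ℝ≥0∞) * t ^ (y - a) * t ^ a))
      = ((a:ℝ≥0∞) * eeB t (drStep ν a μ)) * t ^ a := by
    rw [hμ'B, ← ENNReal.tsum_mul_left, ← ENNReal.tsum_mul_right]
    exact tsum_congr fun y => by ring
  have idG : (∑' y, π y * ((M:ℝ≥0∞) * a * t ^ y)) = (M:ℝ≥0∞) * a * eeB t π := by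
    rw [eeB, ← ENNReal.tsum_mul_left]
    exact tsum_congr fun y => by ring
  have idK : (∑' y, π y * ((c:ℝ≥0∞) * ↑y * t ^ y)) = (c:ℝ≥0∞) * eeA t π := by
    rw [eeA, ← ENNReal.tsum_mul_left]
    exact tsum_congr fun y => by ring
  rw [idD, idR, idG, idK] at hsum
  have hGtop : (M:ℝ≥0∞) * a * eeB t π ≠ ⊤ :=
    ENNReal.mul_ne_top (ENNReal.mul_ne_top (ENNReal.natCast_ne_top M) (ENNReal.natCast_ne_top a))
      hBπT
  have hsum2 : ((c:ℝ≥0∞) * eeA t (drStep ν a μ)) * t ^ a + (M:ℝ≥0∞) * a * eeB t π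
      ≤ ((a:ℝ≥0∞) * eeB t (drStep ν a μ)) * t ^ a + (M:ℝ≥0∞) * a * eeB t π :=
    le_trans hsum (add_le_add le_rfl hKπ)
  have hcancel : ((c:ℝ≥0∞) * eeA t (drStep ν a μ)) * t ^ a
      ≤ ((a:ℝ≥0∞) * eeB t (drStep ν a μ)) * t ^ a :=
    (ENNReal.add_le_add_iff_right hGtop).mp hsum2
  have htpow0 : t ^ a ≠ 0 := by
    intro h0
    exact absurd (le_trans (one_le_pow_of_one_le' ht1 a) (le_of_eq h0)) (by simp)
  exact (ENNReal.mul_le_mul_iff_left htpow0 (ENNReal.pow_ne_top htT)).mp hcancel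

/-! ### Derivative lower bound -/

lemma deriv_ge_partial (μ0 : PMF ℕ) (s0 : ℝ) (hs1 : 1 < s0)
    (hF0 : Summable fun k : ℕ => (μ0 k).toReal * s0 ^ k)
    (hd0 : DifferentiableAt ℝ (genFun μ0) s0) (K : ℕ) :
    ∑ k ∈ Finset.range K, (μ0 k).toReal * (k * s0 ^ (k - 1)) ≤ deriv (genFun μ0) s0 := by
  set f := genFun μ0 with hf
  set p : ℝ → ℝ := fun s => ∑ k ∈ Finset.range K, (μ0 k).toReal * s ^ k with hpdef
  have hc : ∀ k : ℕ, 0 ≤ (μ0 k).toReal := fun k => ENNReal.toReal_nonneg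
  have hp : HasDerivAt p (∑ k ∈ Finset.range K, (μ0 k).toReal * (k * s0 ^ (k - 1))) s0 := by
    apply HasDerivAt.fun_sum
    intro k _
    simpa [mul_comm, mul_assoc, mul_left_comm] using (hasDerivAt_pow k s0).const_mul ((μ0 k).toReal)
  set l : Filter ℝ := nhdsWithin s0 (Set.Ioo 1 s0) with hl
  haveI hne : l.NeBot := by
    rw [hl]
    refine mem_closure_iff_nhdsWithin_neBot.mp ?_
    rw [closure_Ioo (ne_of_lt hs1)]
    exact Set.right_mem_Icc.mpr (le_of_lt hs1)
  have hsub : Set.Ioo (1:ℝ) s0 ⊆ {s0}ᶜ := fun x hx => ne_of_lt hx.2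
  have tends_f : Tendsto (slope f s0) l (nhds (deriv f s0)) :=
    (hasDerivAt_iff_tendsto_slope.mp hd0.hasDerivAt).mono_left (nhdsWithin_mono s0 hsub)
  have tends_p : Tendsto (slope p s0) l
      (nhds (∑ k ∈ Finset.range K, (μ0 k).toReal * (k * s0 ^ (k - 1)))) :=
    (hasDerivAt_iff_tendsto_slope.mp hp).mono_left (nhdsWithin_mono s0 hsub)
  have hev : ∀ᶠ s in l, slope p s0 s ≤ slope f s0 s := by
    refine eventually_mem_nhdsWithin.mono fun s hs => ?_
    obtain ⟨hs1', hs2⟩ := hs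
    have hs0le : s ≤ s0 := le_of_lt hs2
    have hsnn : (0:ℝ) ≤ s := le_trans zero_le_one (le_of_lt hs1')
    have hsummul : Summable fun k : ℕ => (μ0 k).toReal * s ^ k := by
      refine Summable.of_nonneg_of_le (fun k => mul_nonneg (hc k) (pow_nonneg hsnn k))
        (fun k => mul_le_mul_of_nonneg_left (pow_le_pow_left₀ hsnn hs0le k) (hc k)) hF0
    have hnum : p s0 - p s ≤ f s0 - f s := by
      have hfs : f s0 - f s = ∑' k : ℕ, ((μ0 k).toReal * s0 ^ k - (μ0 k).toReal * s ^ k) :=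
        (Summable.tsum_sub hF0 hsummul).symm
      have hps : p s0 - p s
          = ∑ k ∈ Finset.range K, ((μ0 k).toReal * s0 ^ k - (μ0 k).toReal * s ^ k) := by
        rw [hpdef, ← Finset.sum_sub_distrib]
      rw [hfs, hps]
      refine Summable.sum_le_tsum _ (fun k _ => ?_) (hF0.sub hsummul)
      exact sub_nonneg.mpr (mul_le_mul_of_nonneg_left (pow_le_pow_left₀ hsnn hs0le k) (hc k))
    have hden : 0 < s0 - s := sub_pos.mpr hs2
    have e1 : slope p s0 s = (p s0 - p s) / (s0 - s) := by
      rw [slope_def_field]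
      rw [div_eq_div_iff (sub_ne_zero.mpr (ne_of_lt hs2)) (ne_of_gt hden)]
      ring
    have e2 : slope f s0 s = (f s0 - f s) / (s0 - s) := by
      rw [slope_def_field]
      rw [div_eq_div_iff (sub_ne_zero.mpr (ne_of_lt hs2)) (ne_of_gt hden)]
      ring
    rw [e1, e2]
    exact div_le_div_of_nonneg_right hnum hden.le
  exact le_of_tendsto_of_tendsto tends_p tends_f hev

lemma realA_le (μ0 : PMF ℕ) (s0 : ℝ) (hs1 : 1 < s0)
    (hF0 : Summable fun k : ℕ => (μ0 k).toReal * s0 ^ k)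
    (hF0' : Summable fun k : ℕ => (μ0 k).toReal * (k * s0 ^ k))
    (hd0 : DifferentiableAt ℝ (genFun μ0) s0) :
    (∑' k : ℕ, (μ0 k).toReal * (k * s0 ^ k)) ≤ s0 * deriv (genFun μ0) s0 := by
  have hc : ∀ k : ℕ, 0 ≤ (μ0 k).toReal := fun k => ENNReal.toReal_nonneg
  have hs0 : (0:ℝ) < s0 := lt_trans zero_lt_one hs1
  refine Summable.tsum_le_of_sum_le hF0' fun s => ?_
  obtain ⟨K, hK⟩ := s.exists_nat_subset_range
  calc ∑ k ∈ s, (μ0 k).toReal * (k * s0 ^ k)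
      ≤ ∑ k ∈ Finset.range K, (μ0 k).toReal * (k * s0 ^ k) := by
        refine Finset.sum_le_sum_of_subset_of_nonneg hK fun k _ _ => ?_
        exact mul_nonneg (hc k) (mul_nonneg (Nat.cast_nonneg k) (pow_nonneg (le_of_lt hs0) k))
    _ = s0 * ∑ k ∈ Finset.range K, (μ0 k).toReal * (k * s0 ^ (k - 1)) := by
        rw [Finset.mul_sum]
        refine Finset.sum_congr rfl fun k _ => ?_
        cases k with
        | zero => simp
        | succ n => rw [Nat.add_sub_cancel, pow_succ]; ring
    _ ≤ s0 * deriv (genFun μ0) s0 :=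
        mul_le_mul_of_nonneg_left (deriv_ge_partial μ0 s0 hs1 hF0 hd0 K) (le_of_lt hs0)

end Aux

/-- subcriticality: with `N ≤ M` a.s., if
`(M−1)s₀F'_0(s₀) − aF_0(s₀) < 0` where `s₀ = 1 + (M−1)/a`, then
`Q = lim_n E[X_n]/(E[N])^n = 0`. -/
theorem dr_subcritical (ν μ0 : PMF ℕ) (a M : ℕ) (ha : 1 ≤ a) (hM : 2 ≤ M)
    (hν0 : ν 0 = 0) (hbd : ∀ k, M < k → ν k = 0) (hm1 : 1 < pmfMean ν)
    (s0 : ℝ) (hs0 : s0 = 1 + ((M : ℝ) - 1) / (a : ℝ))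
    (hF0 : Summable fun k : ℕ => (μ0 k).toReal * s0 ^ k)
    (hF0' : Summable fun k : ℕ => (μ0 k).toReal * (k * s0 ^ k))
    (hd0 : DifferentiableAt ℝ (genFun μ0) s0)
    (hD0 : ((M : ℝ) - 1) * s0 * deriv (genFun μ0) s0 - a * genFun μ0 s0 < 0) :
    Tendsto (fun n => pmfMean (drSeq ν μ0 a n) / pmfMean ν ^ n) atTop (nhds (0 : ℝ≥0∞)) := by
  set c : ℕ := M - 1 with hc
  have hMc : M = c + 1 := by omega
  have hc1 : 1 ≤ c := by omega
  have haR : (0:ℝ) < a := by exact_mod_cast ha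
  have hcR : (0:ℝ) < c := by exact_mod_cast hc1
  have hMr : ((M:ℝ) - 1) = (c:ℝ) := by rw [hMc]; push_cast; ring
  have hs1 : 1 < s0 := by
    rw [hs0, hMr]
    nlinarith [div_pos hcR haR]
  have hs0nn : (0:ℝ) ≤ s0 := by linarith
  set t : ℝ≥0∞ := ENNReal.ofReal s0 with htdef0
  have htdef : t = 1 + ((M - 1 : ℕ) : ℝ≥0∞) / a := by
    rw [htdef0, hs0, hMr, ENNReal.ofReal_add zero_le_one (by positivity),
      ENNReal.ofReal_div_of_pos haR, ENNReal.ofReal_one, ENNReal.ofReal_natCast,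
      ENNReal.ofReal_natCast]
  have ht1 : (1:ℝ≥0∞) ≤ t := by rw [htdef]; exact le_self_add
  -- initial conditions at time 0
  have hmuTop : ∀ k, μ0 k ≠ ⊤ := fun k => (μ0.apply_lt_top k).ne
  have hBval : ∀ μ' : PMF ℕ, eeB t μ' = ∑' k, ENNReal.ofReal ((μ' k).toReal * s0 ^ k) := by
    intro μ'
    refine tsum_congr fun k => ?_
    rw [ENNReal.ofReal_mul (ENNReal.toReal_nonneg), ENNReal.ofReal_toReal ((μ'.apply_lt_top k).ne),
      ENNReal.ofReal_pow hs0nn]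
  have hAval : eeA t μ0 = ∑' k, ENNReal.ofReal ((μ0 k).toReal * ((k:ℝ) * s0 ^ k)) := by
    refine tsum_congr fun k => ?_
    rw [ENNReal.ofReal_mul (ENNReal.toReal_nonneg), ENNReal.ofReal_mul (Nat.cast_nonneg k),
      ENNReal.ofReal_toReal (hmuTop k), ENNReal.ofReal_pow hs0nn, ENNReal.ofReal_natCast]
  have hB0 : eeB t μ0 = ENNReal.ofReal (∑' k : ℕ, (μ0 k).toReal * s0 ^ k) := by
    rw [hBval μ0, ENNReal.ofReal_tsum_of_nonneg
      (fun k => mul_nonneg ENNReal.toReal_nonneg (pow_nonneg hs0nn k)) hF0]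
  have hA0 : eeA t μ0 = ENNReal.ofReal (∑' k : ℕ, (μ0 k).toReal * ((k:ℝ) * s0 ^ k)) := by
    rw [hAval, ENNReal.ofReal_tsum_of_nonneg
      (fun k => mul_nonneg ENNReal.toReal_nonneg
        (mul_nonneg (Nat.cast_nonneg k) (pow_nonneg hs0nn k))) hF0']
  have hB0T : eeB t μ0 ≠ ⊤ := by rw [hB0]; exact ENNReal.ofReal_ne_top
  have hinit : ((M - 1 : ℕ) : ℝ≥0∞) * eeA t μ0 ≤ (a:ℝ≥0∞) * eeB t μ0 := by
    have hreal : (c:ℝ) * (∑' k : ℕ, (μ0 k).toReal * ((k:ℝ) * s0 ^ k))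
        ≤ (a:ℝ) * (∑' k : ℕ, (μ0 k).toReal * s0 ^ k) := by
      have h1 := realA_le μ0 s0 hs1 hF0 hF0' hd0
      have h2 : (c:ℝ) * (s0 * deriv (genFun μ0) s0) ≤ (a:ℝ) * genFun μ0 s0 := by
        rw [hMr] at hD0; nlinarith [hD0]
      calc (c:ℝ) * (∑' k : ℕ, (μ0 k).toReal * ((k:ℝ) * s0 ^ k))
          ≤ (c:ℝ) * (s0 * deriv (genFun μ0) s0) := by
            exact mul_le_mul_of_nonneg_left h1 (le_of_lt hcR)
        _ ≤ (a:ℝ) * genFun μ0 s0 := h2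
        _ = (a:ℝ) * (∑' k : ℕ, (μ0 k).toReal * s0 ^ k) := rfl
    rw [← hc, hA0, hB0, ← ENNReal.ofReal_natCast c, ← ENNReal.ofReal_natCast a,
      ← ENNReal.ofReal_mul (Nat.cast_nonneg c), ← ENNReal.ofReal_mul (Nat.cast_nonneg a)]
    exact ENNReal.ofReal_le_ofReal hreal
  -- propagate along the sequence
  have hprop : ∀ n : ℕ, eeB t (drSeq ν μ0 a n) ≠ ⊤ ∧
      ((M - 1 : ℕ) : ℝ≥0∞) * eeA t (drSeq ν μ0 a n) ≤ (a:ℝ≥0∞) * eeB t (drSeq ν μ0 a n) := by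
    intro n
    induction n with
    | zero => exact ⟨hB0T, hinit⟩
    | succ n ih =>
        exact step ν (drSeq ν μ0 a n) a M ha hM hbd t htdef ih.1 ih.2
  -- mean bound
  have hmean : ∀ n : ℕ, pmfMean (drSeq ν μ0 a n) ≤ (a : ℝ≥0∞) := by
    intro n
    obtain ⟨hBT, hAB⟩ := hprop n
    set μ' := drSeq ν μ0 a n
    have hB1 : 1 ≤ eeB t μ' := one_le_eeB t ht1 μ'
    have hcorr : pmfMean μ' * eeB t μ' ≤ eeA t μ' := corr t ht1 μ'
    have h3 : ((c:ℝ≥0∞) * pmfMean μ') * eeB t μ' ≤ (a:ℝ≥0∞) * eeB t μ' := by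
      calc ((c:ℝ≥0∞) * pmfMean μ') * eeB t μ' = (c:ℝ≥0∞) * (pmfMean μ' * eeB t μ') := by ring
        _ ≤ (c:ℝ≥0∞) * eeA t μ' := mul_le_mul_right hcorr _
        _ ≤ (a:ℝ≥0∞) * eeB t μ' := by rw [← hc] at hAB; exact hAB
    have hB0' : eeB t μ' ≠ 0 := fun h0 => by simp [h0] at hB1
    have h4 : (c:ℝ≥0∞) * pmfMean μ' ≤ (a:ℝ≥0∞) :=
      (ENNReal.mul_le_mul_iff_left hB0' hBT).mp h3
    calc pmfMean μ' ≤ (c:ℝ≥0∞) * pmfMean μ' :=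
          le_mul_of_one_le_left zero_le (by exact_mod_cast hc1)
      _ ≤ (a:ℝ≥0∞) := h4
  -- squeeze
  have hr : (pmfMean ν)⁻¹ < 1 := ENNReal.inv_lt_one.mpr hm1
  have hupper : Tendsto (fun n => (a:ℝ≥0∞) * ((pmfMean ν)⁻¹) ^ n) atTop (nhds 0) := by
    have := ENNReal.Tendsto.const_mul (ENNReal.tendsto_pow_atTop_nhds_zero_of_lt_one hr)
      (Or.inr (ENNReal.natCast_ne_top a))
    simpa using this
  refine tendsto_of_tendsto_of_tendsto_of_le_of_le tendsto_const_nhds hupper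
    (fun n => zero_le) (fun n => ?_)
  calc pmfMean (drSeq ν μ0 a n) / pmfMean ν ^ n
      ≤ (a:ℝ≥0∞) / pmfMean ν ^ n := ENNReal.div_le_div_right (hmean n) _
    _ = (a:ℝ≥0∞) * ((pmfMean ν)⁻¹) ^ n := by rw [div_eq_mul_inv, ENNReal.inv_pow]
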